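/- Let u > 1, φ(t) = 1 - e^t + e^{2t} + e^{3t}, let A be a finite set of non-negative real numbers with positive weights λ_α summing to 1, let β = ∑ λ_α α, let c_α > 0 for α ∈ A and c_β ∈ ℝ. Then ∑_{α∈A} c_α φ(α ln u) + c_β φ(β ln u) ≥ (Θ + c_β) φ(β ln u), where Θ = ∏_{α∈A} (c_α/λ_α)^{λ_α}. -/

import Mathlib

open Real

noncomputable def φ0 (t : ℝ) : ℝ := 1 - exp t + exp (2*t) + exp (3*t)
noncomputable def φ1 (t : ℝ) : ℝ := -exp t + 2*exp (2*t) + 3*exp (3*t)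
noncomputable def φ2 (t : ℝ) : ℝ := -exp t + 4*exp (2*t) + 9*exp (3*t)

lemma φ0_pos (t : ℝ) : 0 < φ0 t := by
  have h2 : exp (2*t) = exp t * exp t := by rw [two_mul, exp_add]
  have := exp_pos t
  have := exp_pos (3*t)
  unfold φ0
  nlinarith [sq_nonneg (exp t - 1/2)]

lemma hd_exp (k t : ℝ) : HasDerivAt (fun s => exp (k*s)) (k * exp (k*t)) t := by
  simpa [mul_comm, Function.comp_def] using (Real.hasDerivAt_exp (k*t)).comp t ((hasDerivAt_id t).const_mul k)

lemma hd0 (t : ℝ) : HasDerivAt φ0 (φ1 t) t := by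
  have h := (((hasDerivAt_const t (1:ℝ)).sub (Real.hasDerivAt_exp t)).add (hd_exp 2 t)).add
    (hd_exp 3 t)
  unfold φ0 φ1
  refine h.congr_deriv ?_
  ring

lemma hd1 (t : ℝ) : HasDerivAt φ1 (φ2 t) t := by
  have h := (((Real.hasDerivAt_exp t).neg.add ((hd_exp 2 t).const_mul 2)).add
    ((hd_exp 3 t).const_mul 3))
  unfold φ1 φ2
  refine h.congr_deriv ?_
  ring

lemma hg (t : ℝ) : HasDerivAt (fun s => log (φ0 s)) (φ1 t / φ0 t) t :=
  (hd0 t).log (φ0_pos t).ne'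

lemma key_nonneg {x : ℝ} (hx : 1 ≤ x) :
    0 ≤ (-x+4*x^2+9*x^3)*(1-x+x^2+x^3) - (-x+2*x^2+3*x^3)^2 := by
  have hy : 0 ≤ x - 1 := by linarith
  nlinarith [pow_nonneg hy 2, pow_nonneg hy 3, pow_nonneg hy 4, pow_nonneg hy 5,
    pow_nonneg hy 6, pow_nonneg hy 7, hy]

lemma logφ_convex : ConvexOn ℝ (Set.Ici (0:ℝ)) (fun t => log (φ0 t)) := by
  have hdiff : Differentiable ℝ (fun t => log (φ0 t)) := fun t => (hg t).differentiableAt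
  have hderiv : deriv (fun t => log (φ0 t)) = fun t => φ1 t / φ0 t := by
    funext t; exact (hg t).deriv
  have hd2 : ∀ t, HasDerivAt (fun s => φ1 s / φ0 s)
      ((φ2 t * φ0 t - φ1 t * φ1 t) / φ0 t ^ 2) t := fun t =>
    (hd1 t).div (hd0 t) (φ0_pos t).ne'
  refine convexOn_of_deriv2_nonneg (convex_Ici 0) hdiff.continuous.continuousOn
    hdiff.differentiableOn ?_ ?_
  · rw [hderiv]; exact fun t _ => ((hd2 t).differentiableAt).differentiableWithinAt
  · intro t ht
    have : deriv^[2] (fun t => log (φ0 t)) t = (φ2 t * φ0 t - φ1 t * φ1 t) / φ0 t ^ 2 := by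
      simp only [Function.iterate_succ, Function.iterate_zero, Function.comp_apply, id_eq,
        hderiv]
      exact (hd2 t).deriv
    rw [this]
    apply div_nonneg _ (sq_nonneg _)
    have ht0 : (0:ℝ) ≤ t := le_of_lt (by simpa using ht)
    have hx : 1 ≤ exp t := one_le_exp ht0
    have h2 : exp (2*t) = exp t ^ 2 := by rw [two_mul, exp_add]; ring
    have h3 : exp (3*t) = exp t ^ 3 := by
      rw [show (3:ℝ)*t = t + 2*t by ring, exp_add, h2]; ring
    have := key_nonneg hx
    unfold φ0 φ1 φ2
    rw [h2, h3]
    nlinarith [this]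

theorem stmt_9 {ι : Type*} (u : ℝ) (hu : 1 < u)
    (φ : ℝ → ℝ)
    (hφ : φ = fun t : ℝ => 1 - Real.exp t + Real.exp (2*t) + Real.exp (3*t))
    (A : Finset ι) (a : ι → ℝ) (ha : ∀ α ∈ A, 0 ≤ a α)
    (lam : ι → ℝ) (hlam : ∀ α ∈ A, 0 < lam α) (hsum : ∑ α ∈ A, lam α = 1)
    (β : ℝ) (hβ : β = ∑ α ∈ A, lam α * a α)
    (c : ι → ℝ) (hc : ∀ α ∈ A, 0 < c α) (cβ : ℝ)
    (Θ : ℝ) (hΘ : Θ = ∏ α ∈ A, (c α / lam α) ^ lam α) :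
    (Θ + cβ) * φ (β * Real.log u)
      ≤ ∑ α ∈ A, c α * φ (a α * Real.log u) + cβ * φ (β * Real.log u) := by
  have hφ0 : φ = φ0 := by rw [hφ]; rfl
  rw [hφ0]
  set L := Real.log u with hL
  have hLpos : 0 < L := Real.log_pos hu
  have hmem : ∀ α ∈ A, a α * L ∈ Set.Ici (0:ℝ) := fun α hα => mul_nonneg (ha α hα) hLpos.le
  have hJ := logφ_convex.map_sum_le (t := A) (w := lam) (p := fun α => a α * L)
      (fun α hα => (hlam α hα).le) hsum hmem
  have hsum' : ∑ α ∈ A, lam α • (a α * L) = β * L := by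
    rw [hβ, Finset.sum_mul]
    exact Finset.sum_congr rfl fun α _ => by rw [smul_eq_mul]; ring
  rw [hsum'] at hJ
  simp only [smul_eq_mul] at hJ
  have hA : φ0 (β*L) ≤ ∏ α ∈ A, φ0 (a α * L) ^ lam α := by
    rw [← Real.exp_log (φ0_pos (β*L))]
    calc Real.exp (Real.log (φ0 (β*L)))
        ≤ Real.exp (∑ α ∈ A, lam α * Real.log (φ0 (a α * L))) := Real.exp_le_exp.2 hJ
      _ = ∏ α ∈ A, Real.exp (lam α * Real.log (φ0 (a α * L))) := Real.exp_sum _ _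
      _ = ∏ α ∈ A, φ0 (a α * L) ^ lam α := Finset.prod_congr rfl fun α _ => by
            rw [Real.rpow_def_of_pos (φ0_pos _), mul_comm]
  have hΘnn : 0 ≤ Θ := hΘ ▸ Finset.prod_nonneg fun α hα =>
    Real.rpow_nonneg (div_nonneg (hc α hα).le (hlam α hα).le) _
  have hB : Θ * ∏ α ∈ A, φ0 (a α * L) ^ lam α ≤ ∑ α ∈ A, c α * φ0 (a α * L) := by
    rw [hΘ, ← Finset.prod_mul_distrib]
    have heq : ∀ α ∈ A, (c α / lam α) ^ lam α * φ0 (a α * L) ^ lam α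
        = ((c α / lam α) * φ0 (a α * L)) ^ lam α := fun α hα =>
      (Real.mul_rpow (div_nonneg (hc α hα).le (hlam α hα).le) (φ0_pos _).le).symm
    rw [Finset.prod_congr rfl heq]
    have hAM := Real.geom_mean_le_arith_mean_weighted A lam
      (fun α => (c α / lam α) * φ0 (a α * L)) (fun α hα => (hlam α hα).le) hsum
      (fun α hα => mul_nonneg (div_nonneg (hc α hα).le (hlam α hα).le) (φ0_pos _).le)
    refine hAM.trans_eq (Finset.sum_congr rfl fun α hα => ?_)
    have h0 : lam α ≠ 0 := (hlam α hα).ne'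
    field_simp
  have hmain : Θ * φ0 (β*L) ≤ ∑ α ∈ A, c α * φ0 (a α * L) :=
    le_trans (mul_le_mul_of_nonneg_left hA hΘnn) hB
  rw [add_mul]
  linarith
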